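/- A symmetric bilinear form B on sl(2,F) (char F ≠ 2,3) with basis H, X, Y satisfying [H,X]=2X, [H,Y]=−2Y, [X,Y]=H, is cyclic if and only if 4·B(X,Y) + B(H,H) = 0. -/

import Mathlib

/-- A symmetric bilinear form B on sl(2,F) (basis H, X, Y with
[H,X]=2X, [H,Y]=−2Y, [X,Y]=H; char F ≠ 2,3) is cyclic iff 4·B(X,Y) + B(H,H) = 0. -/
theorem sl2_cyclic_iff
    {F L : Type*} [Field F] [LieRing L] [LieAlgebra F L]
    (hchar2 : ringChar F ≠ 2) (hchar3 : ringChar F ≠ 3)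
    (H X Y : L) (b : Module.Basis (Fin 3) F L) (hb : ⇑b = ![H, X, Y])
    (hHX : ⁅H, X⁆ = (2 : F) • X) (hHY : ⁅H, Y⁆ = -((2 : F) • Y)) (hXY : ⁅X, Y⁆ = H)
    (B : L →ₗ[F] L →ₗ[F] F)
    (hsymm : ∀ x y : L, B x y = B y x) :
    (∀ x y z : L, B ⁅x, y⁆ z + B ⁅y, z⁆ x + B ⁅z, x⁆ y = 0) ↔
      4 * B X Y + B H H = 0 := by
  have hYH : ⁅Y, H⁆ = (2 : F) • Y := by
    rw [← lie_skew, hHY]; simp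
  have hXH : ⁅X, H⁆ = -((2 : F) • X) := by
    rw [← lie_skew, hHX]
  have hYX : ⁅Y, X⁆ = -H := by
    rw [← lie_skew, hXY]
  constructor
  · intro hcyc
    have h := hcyc H X Y
    rw [hHX, hXY, hYH] at h
    simp only [map_smul, LinearMap.smul_apply, smul_eq_mul] at h
    linear_combination h - 2 * hsymm Y X
  · intro h x y z
    have expand : ∀ w : L, w = b.repr w 0 • H + b.repr w 1 • X + b.repr w 2 • Y := by
      intro w
      have hw := b.sum_repr w
      rw [Fin.sum_univ_three] at hw
      simp only [hb, Matrix.cons_val_zero, Matrix.cons_val_one, Matrix.head_cons,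
        Matrix.cons_val_two, Matrix.tail_cons] at hw
      exact hw.symm
    set a0 := b.repr x 0; set a1 := b.repr x 1; set a2 := b.repr x 2
    set c0 := b.repr y 0; set c1 := b.repr y 1; set c2 := b.repr y 2
    set d0 := b.repr z 0; set d1 := b.repr z 1; set d2 := b.repr z 2
    have hx : x = a0 • H + a1 • X + a2 • Y := expand x
    have hy : y = c0 • H + c1 • X + c2 • Y := expand y
    have hz : z = d0 • H + d1 • X + d2 • Y := expand z
    rw [hx, hy, hz]
    simp only [lie_add, add_lie, lie_smul, smul_lie, hHX, hHY, hXY, hXH, hYH, hYX,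
      lie_self, smul_zero, smul_neg, smul_smul, map_add, map_smul, map_neg, map_zero,
      LinearMap.add_apply, LinearMap.smul_apply, LinearMap.neg_apply, LinearMap.zero_apply,
      smul_eq_mul]
    rw [show B X H = B H X from hsymm X H, show B Y H = B H Y from hsymm Y H,
      show B Y X = B X Y from hsymm Y X]
    linear_combination (a0*c1*d2 - a0*c2*d1 - a1*c0*d2 + a1*c2*d0 + a2*c0*d1 - a2*c1*d0) * h
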